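/- arXiv:1705.08016 — 3 statements merged into one kernel-verified Lean document; each statement's English description precedes it below -/
import Mathlib

section
/- Let 0 < δ₁ < 1/2 and 0 < δ₂ < 1/2. Let p and q be the probability vectors on a two-element set given by p = (1 − δ₁, δ₁) and q = (δ₂, 1 − δ₂). Then the Jeffrey's divergence satisfies D_J(p, q) ≥ (1 − δ₁ − δ₂) · (2·log(1 − δ₁ − δ₂) − log(δ₁ δ₂)). -/
open Real Finset

/-- Jeffrey's divergence for pmfs on a finite type. -/
noncomputable def jeffreys {U : Type*} [Fintype U] (p q : U → ℝ) : ℝ :=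
  ∑ u, (p u - q u) * Real.log (p u / q u)

/-- For binary probability vectors `p = (1 − δ₁, δ₁)` and `q = (δ₂, 1 − δ₂)` with
`0 < δ₁ < 1/2`, `0 < δ₂ < 1/2`, Jeffrey's divergence is at least
`(1 − δ₁ − δ₂) · (2·log(1 − δ₁ − δ₂) − log(δ₁ δ₂))`. -/
theorem jeffreys_binary_ge (δ₁ δ₂ : ℝ)
    (h₁ : 0 < δ₁) (h₁' : δ₁ < 1 / 2) (h₂ : 0 < δ₂) (h₂' : δ₂ < 1 / 2) :
    jeffreys ![1 - δ₁, δ₁] ![δ₂, 1 - δ₂] ≥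
      (1 - δ₁ - δ₂) * (2 * Real.log (1 - δ₁ - δ₂) - Real.log (δ₁ * δ₂)) := by
  have hs : 0 < 1 - δ₁ - δ₂ := by linarith
  have ha : 0 < 1 - δ₁ := by linarith
  have hb : 0 < 1 - δ₂ := by linarith
  have hJ : jeffreys ![1 - δ₁, δ₁] ![δ₂, 1 - δ₂] =
      (1 - δ₁ - δ₂) * (Real.log (1 - δ₁) + Real.log (1 - δ₂) - Real.log (δ₁ * δ₂)) := by
    simp only [jeffreys, Fin.sum_univ_two, Matrix.cons_val_zero, Matrix.cons_val_one,
      Matrix.head_cons]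
    rw [Real.log_div ha.ne' h₂.ne', Real.log_div h₁.ne' hb.ne',
      Real.log_mul h₁.ne' h₂.ne']
    ring
  rw [hJ]
  have h1 : Real.log (1 - δ₁ - δ₂) ≤ Real.log (1 - δ₁) :=
    Real.log_le_log hs (by linarith)
  have h2 : Real.log (1 - δ₁ - δ₂) ≤ Real.log (1 - δ₂) :=
    Real.log_le_log hs (by linarith)
  have := mul_le_mul_of_nonneg_left
    (show 2 * Real.log (1 - δ₁ - δ₂) - Real.log (δ₁ * δ₂) ≤
      Real.log (1 - δ₁) + Real.log (1 - δ₂) - Real.log (δ₁ * δ₂) by linarith) hs.le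
  linarith
end

section
/- (Lemma 1.) On a finite probability space, the Euclidean Confusion is a lower bound for the Jeffrey's divergence: for strictly positive probability mass functions p and q on a finite set U, D_EC(p, q) ≤ D_J(p, q). -/
open Real Finset

lemma aux_le {a b : ℝ} (hb : 0 < b) (hba : b ≤ a) (ha1 : a ≤ 1) :
    (a - b) ^ 2 ≤ (a - b) * Real.log (a / b) := by
  have ha : 0 < a := lt_of_lt_of_le hb hba
  have h1 : 1 - b / a ≤ Real.log (a / b) := by
    have := Real.log_le_sub_one_of_pos (show 0 < b / a by positivity)
    have hlog : Real.log (a / b) = - Real.log (b / a) := by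
      rw [← Real.log_inv]; congr 1; field_simp
    linarith
  have h2 : a - b ≤ a * Real.log (a / b) := by
    have := mul_le_mul_of_nonneg_left h1 ha.le
    have : a * (1 - b / a) = a - b := by field_simp
    nlinarith [mul_le_mul_of_nonneg_left h1 ha.le]
  have hab : 0 ≤ a - b := by linarith
  nlinarith [mul_le_mul_of_nonneg_left h2 hab, Real.log_nonneg (show 1 ≤ a / b by
    rw [le_div_iff₀ hb]; linarith)]

lemma aux {a b : ℝ} (ha : 0 < a) (hb : 0 < b) (ha1 : a ≤ 1) (hb1 : b ≤ 1) :
    (a - b) ^ 2 ≤ (a - b) * Real.log (a / b) := by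
  rcases le_total b a with h | h
  · exact aux_le hb h ha1
  · have := aux_le ha h hb1
    have hlog : Real.log (a / b) = - Real.log (b / a) := by
      rw [← Real.log_inv]; congr 1; field_simp
    calc (a - b) ^ 2 = (b - a) ^ 2 := by ring
    _ ≤ (b - a) * Real.log (b / a) := this
    _ = (a - b) * Real.log (a / b) := by rw [hlog]; ring

/-- **Lemma 1.** On a finite probability space, the Euclidean Confusion is a lower bound for
Jeffrey's divergence: for strictly positive pmfs `p`, `q`,
`∑ (p u − q u)² ≤ ∑ (p u − q u)·log(p u / q u)`. -/
theorem euclidean_confusion_le_jeffreys {U : Type*} [Fintype U] (p q : U → ℝ)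
    (hp : ∀ u, 0 < p u) (hq : ∀ u, 0 < q u)
    (hp1 : ∑ u, p u = 1) (hq1 : ∑ u, q u = 1) :
    ∑ u, (p u - q u) ^ 2 ≤ ∑ u, (p u - q u) * Real.log (p u / q u) := by
  apply Finset.sum_le_sum
  intro u _
  have hpu : p u ≤ 1 := by
    rw [← hp1]
    exact Finset.single_le_sum (fun i _ => (hp i).le) (Finset.mem_univ u)
  have hqu : q u ≤ 1 := by
    rw [← hq1]
    exact Finset.single_le_sum (fun i _ => (hq i).le) (Finset.mem_univ u)
  exact aux (hp u) (hq u) hpu hqu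
end

section
/- (Lemma 3.) Let a : Fin m → ℝ^N and b : Fin n → ℝ^N be finite families of vectors with m, n ≥ 1. Then half the squared energy distance under the squared-Euclidean cost, with random vectors sampled uniformly from the two families, is bounded above by the set-level Euclidean Confusion: (1/2)·D_EN(a, b)² ≤ D_EC(a, b). -/
open Finset

/-- Set-level Euclidean Confusion between two finite families of vectors in `ℝ^N`. -/
noncomputable def euclideanConfusionSets {N m n : ℕ}
    (a : Fin m → EuclideanSpace ℝ (Fin N)) (b : Fin n → EuclideanSpace ℝ (Fin N)) : ℝ :=
  (1 / (m * n) : ℝ) * ∑ u, ∑ v, ‖a u - b v‖ ^ 2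

/-- Squared energy distance under the squared-Euclidean cost, with all random vectors sampled
uniformly and independently from the two families. -/
noncomputable def energyDistanceSq {N m n : ℕ}
    (a : Fin m → EuclideanSpace ℝ (Fin N)) (b : Fin n → EuclideanSpace ℝ (Fin N)) : ℝ :=
  2 * ((1 / (m * n) : ℝ) * ∑ u, ∑ v, ‖a u - b v‖ ^ 2)
    - (1 / (m : ℝ) ^ 2) * ∑ u, ∑ u', ‖a u - a u'‖ ^ 2
    - (1 / (n : ℝ) ^ 2) * ∑ v, ∑ v', ‖b v - b v'‖ ^ 2

/-- **Lemma 3.** For finite families `a : Fin m → ℝ^N`, `b : Fin n → ℝ^N` with `m, n ≥ 1`: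
`(1/2)·D_EN(a, b)² ≤ D_EC(a, b)`. -/
theorem half_energyDistanceSq_le_euclideanConfusion {N m n : ℕ} (hm : 1 ≤ m) (hn : 1 ≤ n)
    (a : Fin m → EuclideanSpace ℝ (Fin N)) (b : Fin n → EuclideanSpace ℝ (Fin N)) :
    (1 / 2) * energyDistanceSq a b ≤ euclideanConfusionSets a b := by
  unfold energyDistanceSq euclideanConfusionSets
  have ha : (0:ℝ) ≤ ∑ u, ∑ u', ‖a u - a u'‖ ^ 2 :=
    Finset.sum_nonneg fun u _ => Finset.sum_nonneg fun u' _ => by positivity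
  have hb : (0:ℝ) ≤ ∑ v, ∑ v', ‖b v - b v'‖ ^ 2 :=
    Finset.sum_nonneg fun v _ => Finset.sum_nonneg fun v' _ => by positivity
  have hma : (0:ℝ) ≤ 1 / (m : ℝ) ^ 2 := by positivity
  have hnb : (0:ℝ) ≤ 1 / (n : ℝ) ^ 2 := by positivity
  nlinarith [mul_nonneg hma ha, mul_nonneg hnb hb]
end
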